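/- For y > 0, the function y ↦ y·H'(y)/H(y) is monotone decreasing, where H(x) = tanh(x/√2). -/

import Mathlib

noncomputable def H : ℝ → ℝ := fun x => Real.tanh (x / Real.sqrt 2)

open Real

lemma sqrt2_pos : (0:ℝ) < Real.sqrt 2 := Real.sqrt_pos.2 (by norm_num)

lemma hasDerivAt_H (y : ℝ) :
    HasDerivAt H (1 / (Real.sqrt 2 * Real.cosh (y / Real.sqrt 2) ^ 2)) y := by
  have hc : Real.cosh (y / Real.sqrt 2) ≠ 0 := (Real.cosh_pos _).ne'
  have hid : HasDerivAt (fun x : ℝ => x / Real.sqrt 2) (1 / Real.sqrt 2) y := by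
    simpa using (hasDerivAt_id y).div_const (Real.sqrt 2)
  have hs : HasDerivAt (fun x : ℝ => Real.sinh (x / Real.sqrt 2))
      (Real.cosh (y / Real.sqrt 2) * (1 / Real.sqrt 2)) y :=
    (Real.hasDerivAt_sinh _).comp y hid
  have hco : HasDerivAt (fun x : ℝ => Real.cosh (x / Real.sqrt 2))
      (Real.sinh (y / Real.sqrt 2) * (1 / Real.sqrt 2)) y :=
    (Real.hasDerivAt_cosh _).comp y hid
  have := hs.div hco hc
  have hH : H = fun x : ℝ => Real.sinh (x / Real.sqrt 2) / Real.cosh (x / Real.sqrt 2) := by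
    funext x; simp [H, Real.tanh_eq_sinh_div_cosh]
  rw [hH]
  refine this.congr_deriv ?_
  have h1 : Real.cosh (y / Real.sqrt 2) ^ 2 - Real.sinh (y / Real.sqrt 2) ^ 2 = 1 :=
    Real.cosh_sq_sub_sinh_sq _
  rw [show Real.cosh (y / Real.sqrt 2) * (1 / Real.sqrt 2) * Real.cosh (y / Real.sqrt 2) -
      Real.sinh (y / Real.sqrt 2) * (Real.sinh (y / Real.sqrt 2) * (1 / Real.sqrt 2)) =
      (Real.cosh (y / Real.sqrt 2) ^ 2 - Real.sinh (y / Real.sqrt 2) ^ 2) * (1 / Real.sqrt 2)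
      by ring, h1, one_mul, div_div]

lemma sinh_lt_mul_cosh {x : ℝ} (hx : 0 < x) : Real.sinh x < x * Real.cosh x := by
  have hmono : StrictMonoOn (fun t : ℝ => t * Real.cosh t - Real.sinh t) (Set.Ici 0) := by
    apply strictMonoOn_of_deriv_pos (convex_Ici 0)
    · fun_prop
    · intro t ht
      rw [interior_Ici, Set.mem_Ioi] at ht
      have h1 : HasDerivAt (fun t : ℝ => t * Real.cosh t - Real.sinh t)
          (1 * Real.cosh t + t * Real.sinh t - Real.cosh t) t :=
        ((hasDerivAt_id t).mul (Real.hasDerivAt_cosh t)).sub (Real.hasDerivAt_sinh t)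
      rw [h1.deriv]
      have := Real.sinh_pos_iff.2 ht
      nlinarith
  have := hmono (Set.self_mem_Ici) (Set.mem_Ici.2 hx.le) hx
  simpa using this

lemma strictAntiOn_div_sinh : StrictAntiOn (fun s : ℝ => s / Real.sinh s) (Set.Ioi 0) := by
  apply strictAntiOn_of_deriv_neg (convex_Ioi 0)
  · apply ContinuousOn.div continuousOn_id (Real.continuous_sinh.continuousOn)
    intro s hs
    exact (Real.sinh_pos_iff.2 hs).ne'
  · intro s hs
    rw [interior_Ioi, Set.mem_Ioi] at hs
    have hsp := Real.sinh_pos_iff.2 hs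
    have h1 : HasDerivAt (fun s : ℝ => s / Real.sinh s)
        ((1 * Real.sinh s - s * Real.cosh s) / Real.sinh s ^ 2) s :=
      (hasDerivAt_id s).div (Real.hasDerivAt_sinh s) hsp.ne'
    rw [h1.deriv]
    apply div_neg_of_neg_of_pos
    · have := sinh_lt_mul_cosh hs
      nlinarith
    · positivity

lemma f_eq {y : ℝ} (hy : 0 < y) :
    y * deriv H y / H y = (Real.sqrt 2 * y) / Real.sinh (Real.sqrt 2 * y) := by
  rw [(hasDerivAt_H y).deriv]
  have hu : 0 < y / Real.sqrt 2 := div_pos hy sqrt2_pos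
  have hs := Real.sinh_pos_iff.2 hu
  have hc : (0:ℝ) < Real.cosh (y / Real.sqrt 2) := Real.cosh_pos _
  have h2 : Real.sqrt 2 * y = 2 * (y / Real.sqrt 2) := by
    rw [mul_comm 2, div_mul_eq_mul_div, mul_comm y]
    rw [eq_div_iff sqrt2_pos.ne']
    nlinarith [Real.sq_sqrt (by norm_num : (0:ℝ) ≤ 2), sq_nonneg (Real.sqrt 2)]
  rw [h2, Real.sinh_two_mul]
  simp only [H, Real.tanh_eq_sinh_div_cosh]
  rw [h2] at *
  field_simp

/-- For `y > 0`, the function `y ↦ y·H'(y)/H(y)` is monotone decreasing, where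
`H(x) = tanh(x/√2)`. -/
theorem stmt_3 : StrictAntiOn (fun y : ℝ => y * deriv H y / H y) (Set.Ioi 0) := by
  intro a ha b hb hab
  rw [Set.mem_Ioi] at ha hb
  show b * deriv H b / H b < a * deriv H a / H a
  rw [f_eq ha, f_eq hb]
  exact strictAntiOn_div_sinh (Set.mem_Ioi.2 (by positivity))
    (Set.mem_Ioi.2 (by positivity)) (by nlinarith [sqrt2_pos])
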